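/- Given an integral assignment x (x_{ij} ∈ {0,1}, Σ_i x_{ij} = 1) satisfying, for every machine i and every interval [t1,t2], Σ_{j: r_j ∈ [t1,t2]} x_{ij} p_{ij} ≤ t2 - t1 + T, the schedule on each machine that processes assigned jobs in order of release time, each at the earliest possible time, completes every job j by time r_j + T; i.e., the max flow time is at most T. -/
import Mathlib

/-- Lexicographic order on jobs: by release time, ties broken by index. -/
def jle {n : ℕ} (r : Fin n → ℝ) (a b : Fin n) : Prop :=
  r a < r b ∨ (r a = r b ∧ a ≤ b)

noncomputable instance {n : ℕ} (r : Fin n → ℝ) (a b : Fin n) : Decidable (jle r a b) :=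
  inferInstanceAs (Decidable (_ ∨ _))

lemma jle_refl {n : ℕ} (r : Fin n → ℝ) (a : Fin n) : jle r a a :=
  Or.inr ⟨rfl, le_refl _⟩

lemma jle_r_le {n : ℕ} {r : Fin n → ℝ} {a b : Fin n} (h : jle r a b) : r a ≤ r b := by
  rcases h with h | ⟨h, _⟩
  · exact h.le
  · exact h.le

lemma jle_trans {n : ℕ} {r : Fin n → ℝ} {a b c : Fin n}
    (h1 : jle r a b) (h2 : jle r b c) : jle r a c := by
  rcases h1 with h1 | ⟨h1, h1'⟩ <;> rcases h2 with h2 | ⟨h2, h2'⟩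
  · exact Or.inl (h1.trans h2)
  · exact Or.inl (h2 ▸ h1)
  · exact Or.inl (h1 ▸ h2)
  · exact Or.inr ⟨h1.trans h2, h1'.trans h2'⟩

lemma jle_antisymm {n : ℕ} {r : Fin n → ℝ} {a b : Fin n}
    (h1 : jle r a b) (h2 : jle r b a) : a = b := by
  rcases h1 with h1 | ⟨h1, h1'⟩ <;> rcases h2 with h2 | ⟨h2, h2'⟩
  · exact absurd (h1.trans h2) (lt_irrefl _)
  · exact absurd h1 (h2 ▸ lt_irrefl _)
  · exact absurd h2 (h1 ▸ lt_irrefl _)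
  · exact le_antisymm h1' h2'

lemma jle_total {n : ℕ} (r : Fin n → ℝ) (a b : Fin n) : jle r a b ∨ jle r b a := by
  rcases lt_trichotomy (r a) (r b) with h | h | h
  · exact Or.inl (Or.inl h)
  · rcases le_total a b with h' | h'
    · exact Or.inl (Or.inr ⟨h, h'⟩)
    · exact Or.inr (Or.inr ⟨h.symm, h'⟩)
  · exact Or.inr (Or.inl h)

/-- An integral assignment satisfying all interval load constraints admits a
non-preemptive schedule (jobs in release order, at the earliest possible time) in which
every job completes by `r_j + T`, i.e. the max flow time is at most `T`. -/
theorem stmt_17 (n m : ℕ) (p : Fin m → Fin n → ℝ) (r : Fin n → ℝ) (T : ℝ)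
    (hp : ∀ i j, 0 ≤ p i j)
    (σ : Fin n → Fin m)
    (hload : ∀ i (t1 t2 : ℝ), t1 ≤ t2 →
      ∑ j ∈ Finset.univ.filter (fun j => σ j = i ∧ t1 ≤ r j ∧ r j ≤ t2), p i j
        ≤ t2 - t1 + T) :
    ∃ S Cmp : Fin n → ℝ,
      (∀ j, Cmp j = S j + p (σ j) j) ∧
      (∀ j, r j ≤ S j) ∧
      (∀ j j', σ j = σ j' → r j < r j' → S j ≤ S j') ∧
      (∀ j j', j ≠ j' → σ j = σ j' → Cmp j ≤ S j' ∨ Cmp j' ≤ S j) ∧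
      (∀ j, Cmp j ≤ r j + T) := by
  classical
  -- jobs on the same machine preceding (and including) j
  set A : Fin n → Finset (Fin n) :=
    fun j => Finset.univ.filter (fun j' => σ j' = σ j ∧ jle r j' j) with hA
  have hmemA : ∀ j, j ∈ A j := by
    intro j; simp [hA, jle_refl]
  have hAne : ∀ j, (A j).Nonempty := fun j => ⟨j, hmemA j⟩
  -- jobs on machine of j between j' and j
  set B : Fin n → Fin n → Finset (Fin n) :=
    fun j j' => Finset.univ.filter (fun t => σ t = σ j ∧ jle r j' t ∧ jle r t j) with hB
  set f : Fin n → Fin n → ℝ := fun j j' => r j' + ∑ t ∈ B j j', p (σ j) t with hf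
  -- closed form for the completion time of j under greedy scheduling
  set C : Fin n → ℝ := fun j => (A j).sup' (hAne j) (f j) with hC
  have hBjj : ∀ j, B j j = {j} := by
    intro j
    ext t
    simp only [hB, Finset.mem_filter, Finset.mem_univ, true_and, Finset.mem_singleton]
    constructor
    · rintro ⟨-, h1, h2⟩; exact jle_antisymm h2 h1
    · rintro rfl; exact ⟨rfl, jle_refl r t, jle_refl r t⟩
  have hCj_ge : ∀ j, r j + p (σ j) j ≤ C j := by
    intro j
    have h1 : f j j ≤ C j := Finset.le_sup' (f j) (hmemA j)
    simp only [hf, hBjj j, Finset.sum_singleton] at h1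
    exact h1
  -- key lemma: a strictly earlier job on the same machine finishes before j' starts
  have key : ∀ j j', j ≠ j' → σ j = σ j' → jle r j j' → C j ≤ C j' - p (σ j') j' := by
    intro j j' hne hσ hle
    rw [hC]
    apply Finset.sup'_le
    intro j'' hj''
    simp only [hA, Finset.mem_filter, Finset.mem_univ, true_and] at hj''
    obtain ⟨hσ'', hle''⟩ := hj''
    have hj''A' : j'' ∈ A j' := by
      simp only [hA, Finset.mem_filter, Finset.mem_univ, true_and]
      exact ⟨hσ''.trans hσ, jle_trans hle'' hle⟩
    have hCge : f j' j'' ≤ C j' := Finset.le_sup' (f j') hj''A'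
    have hj'B : j' ∈ B j' j'' :=
      Finset.mem_filter.mpr ⟨Finset.mem_univ _, rfl, jle_trans hle'' hle, jle_refl r j'⟩
    have hsub : B j j'' ⊆ (B j' j'').erase j' := by
      intro t ht
      simp only [hB, Finset.mem_filter, Finset.mem_univ, true_and] at ht
      obtain ⟨h1, h2, h3⟩ := ht
      refine Finset.mem_erase.mpr ⟨?_, ?_⟩
      · rintro rfl; exact hne (jle_antisymm hle h3)
      · simp only [hB, Finset.mem_filter, Finset.mem_univ, true_and]
        exact ⟨h1.trans hσ, h2, jle_trans h3 hle⟩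
    have hsum : (∑ t ∈ B j j'', p (σ j') t) ≤ ∑ t ∈ (B j' j'').erase j', p (σ j') t :=
      Finset.sum_le_sum_of_subset_of_nonneg hsub (fun t _ _ => hp _ t)
    have herase : (∑ t ∈ (B j' j'').erase j', p (σ j') t) + p (σ j') j'
        = ∑ t ∈ B j' j'', p (σ j') t := Finset.sum_erase_add _ _ hj'B
    have : f j j'' + p (σ j') j' ≤ f j' j'' := by
      simp only [hf, hσ]
      linarith
    linarith
  refine ⟨fun j => C j - p (σ j) j, C, fun j => by ring, ?_, ?_, ?_, ?_⟩
  · intro j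
    have := hCj_ge j
    simp only
    linarith
  · intro j j' hσ hr
    have hne : j ≠ j' := fun h => absurd (h ▸ hr) (lt_irrefl _)
    have := key j j' hne hσ (Or.inl hr)
    have hpj := hp (σ j) j
    simp only
    linarith
  · intro j j' hne hσ
    rcases jle_total r j j' with h | h
    · left
      have := key j j' hne hσ h
      simp only
      linarith
    · right
      have := key j' j (Ne.symm hne) hσ.symm h
      simp only
      linarith
  · intro j
    rw [hC]
    apply Finset.sup'_le
    intro j'' hj''
    simp only [hA, Finset.mem_filter, Finset.mem_univ, true_and] at hj''
    obtain ⟨hσ'', hle''⟩ := hj''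
    have hrle : r j'' ≤ r j := jle_r_le hle''
    have hsub : B j j'' ⊆ Finset.univ.filter (fun t => σ t = σ j ∧ r j'' ≤ r t ∧ r t ≤ r j) := by
      intro t ht
      simp only [hB, Finset.mem_filter, Finset.mem_univ, true_and] at ht ⊢
      exact ⟨ht.1, jle_r_le ht.2.1, jle_r_le ht.2.2⟩
    have hsum : (∑ t ∈ B j j'', p (σ j) t)
        ≤ ∑ t ∈ Finset.univ.filter (fun t => σ t = σ j ∧ r j'' ≤ r t ∧ r t ≤ r j), p (σ j) t :=
      Finset.sum_le_sum_of_subset_of_nonneg hsub (fun t _ _ => hp _ t)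
    have hl := hload (σ j) (r j'') (r j) hrle
    simp only [hf]
    linarith
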